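/- Let (Ω, Σ, P) be a probability space with a filtration (𝓕_t)_{t≥0}, and let (V_t), (f_t), (g_t), (α_t) be stochastic processes taking values in [0,∞), adapted to (𝓕_t), with each V_t integrable, satisfying E[V_{t+1} | 𝓕_t] ≤ (1 + f_t) V_t + g_t − α_t V_t almost surely for every t, and suppose that almost surely Σ_{t=0}^∞ f_t < ∞, Σ_{t=0}^∞ g_t < ∞ and Σ_{t=0}^∞ α_t = ∞. Let λ ∈ (0, 1] be such that, almost surely: there exists a finite T > 0 with α_t − λ t^{−1} ≥ 0 for all t ≥ T, and Σ_{t=0}^∞ (t+1)^{λ} g_t < ∞ and Σ_{t=0}^∞ (α_t − λ t^{−1}) = ∞. Then t^{λ} V_t → 0 almost surely as t → ∞ (i.e., V_t = o(t^{−λ}) almost surely). -/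

import Mathlib

open MeasureTheory Filter Topology

noncomputable section RSAux

variable {Ω : Type*}

/-- product multiplier `∏_{s<n} (1+F_s)⁻¹`. -/
def rsA (F : ℕ → Ω → ℝ) (n : ℕ) (ω : Ω) : ℝ := ∏ s ∈ Finset.range n, (1 + F s ω)⁻¹

/-- indicator of "not yet stopped at time s": partial sums up to s bounded by K. -/
def rsI (F G : ℕ → Ω → ℝ) (K : ℝ) (s : ℕ) (ω : Ω) : ℝ :=
  Set.indicator {ω | (∑ u ∈ Finset.range (s+1), F u ω) ≤ K ∧
    (∑ u ∈ Finset.range (s+1), G u ω) ≤ K} (fun _ => (1:ℝ)) ω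

def rsIp (F G : ℕ → Ω → ℝ) (K : ℝ) : ℕ → Ω → ℝ
  | 0 => fun _ => 1
  | (m+1) => rsI F G K m

def rsX (W F G B : ℕ → Ω → ℝ) (K : ℝ) (n : ℕ) (ω : Ω) : ℝ :=
  rsIp F G K n ω * rsA F n ω * W n ω
  + ∑ s ∈ Finset.range n, rsI F G K s ω * rsA F (s+1) ω * (B s ω * W s ω - G s ω)

variable {F G B W : ℕ → Ω → ℝ} {K : ℝ} {ω : Ω}

lemma rsA_pos (hF : ∀ t ω, 0 ≤ F t ω) (n : ℕ) (ω : Ω) : 0 < rsA F n ω :=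
  Finset.prod_pos fun s _ => inv_pos.2 (by linarith [hF s ω])

lemma rsA_le_one (hF : ∀ t ω, 0 ≤ F t ω) (n : ℕ) (ω : Ω) : rsA F n ω ≤ 1 :=
  Finset.prod_le_one (fun s _ => le_of_lt (inv_pos.2 (by linarith [hF s ω])))
    (fun s _ => inv_le_one_of_one_le₀ (by linarith [hF s ω]))

lemma rsA_succ (n : ℕ) (ω : Ω) :
    rsA F (n+1) ω = rsA F n ω * (1 + F n ω)⁻¹ := Finset.prod_range_succ _ _

lemma rsA_succ_mul (hF : ∀ t ω, 0 ≤ F t ω) (n : ℕ) (ω : Ω) :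
    rsA F (n+1) ω * (1 + F n ω) = rsA F n ω := by
  rw [rsA_succ]
  have : (1 + F n ω) ≠ 0 := by have := hF n ω; positivity
  field_simp

lemma rsI_eq_zero_or_one (s : ℕ) (ω : Ω) : rsI F G K s ω = 0 ∨ rsI F G K s ω = 1 := by
  unfold rsI; by_cases h : ω ∈ {ω | (∑ u ∈ Finset.range (s+1), F u ω) ≤ K ∧
    (∑ u ∈ Finset.range (s+1), G u ω) ≤ K}
  · right; simp [Set.indicator_of_mem h]
  · left; simp [Set.indicator_of_notMem h]

lemma rsI_nonneg (s : ℕ) (ω : Ω) : 0 ≤ rsI F G K s ω := by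
  rcases rsI_eq_zero_or_one (F := F) (G := G) (K := K) s ω with h | h <;> rw [h] <;> norm_num

lemma rsI_le_one (s : ℕ) (ω : Ω) : rsI F G K s ω ≤ 1 := by
  rcases rsI_eq_zero_or_one (F := F) (G := G) (K := K) s ω with h | h <;> rw [h] <;> norm_num

lemma rsI_eq_one_iff (s : ℕ) (ω : Ω) : rsI F G K s ω = 1 ↔
    ((∑ u ∈ Finset.range (s+1), F u ω) ≤ K ∧ (∑ u ∈ Finset.range (s+1), G u ω) ≤ K) := by
  unfold rsI
  by_cases h : ω ∈ {ω | (∑ u ∈ Finset.range (s+1), F u ω) ≤ K ∧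
    (∑ u ∈ Finset.range (s+1), G u ω) ≤ K}
  · simp only [Set.indicator_of_mem h]; exact iff_of_true trivial h
  · simp only [Set.indicator_of_notMem h]; constructor
    · intro h1; norm_num at h1
    · intro hc; exact absurd hc h

lemma rsI_antitone (hF : ∀ t ω, 0 ≤ F t ω) (hG : ∀ t ω, 0 ≤ G t ω) (s : ℕ) (ω : Ω) :
    rsI F G K (s+1) ω ≤ rsI F G K s ω := by
  rcases rsI_eq_zero_or_one (F := F) (G := G) (K := K) (s+1) ω with h | h
  · rw [h]; exact rsI_nonneg s ω
  · have hs1 : rsI F G K s ω = 1 := by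
      rw [rsI_eq_one_iff] at h
      rw [rsI_eq_one_iff]
      obtain ⟨h1, h2⟩ := h
      constructor
      · refine le_trans ?_ h1
        exact Finset.sum_le_sum_of_subset_of_nonneg
          (Finset.range_subset_range.2 (by omega)) (fun u _ _ => hF u ω)
      · refine le_trans ?_ h2
        exact Finset.sum_le_sum_of_subset_of_nonneg
          (Finset.range_subset_range.2 (by omega)) (fun u _ _ => hG u ω)
    rw [h, hs1]

lemma rsI_le_rsIp (hF : ∀ t ω, 0 ≤ F t ω) (hG : ∀ t ω, 0 ≤ G t ω) (n : ℕ) (ω : Ω) :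
    rsI F G K n ω ≤ rsIp F G K n ω := by
  cases n with
  | zero => exact rsI_le_one 0 ω
  | succ m => exact rsI_antitone hF hG m ω

lemma rsIp_nonneg (n : ℕ) (ω : Ω) : 0 ≤ rsIp F G K n ω := by
  cases n with
  | zero => norm_num [rsIp]
  | succ m => exact rsI_nonneg m ω

lemma rsIp_le_one (n : ℕ) (ω : Ω) : rsIp F G K n ω ≤ 1 := by
  cases n with
  | zero => norm_num [rsIp]
  | succ m => exact rsI_le_one m ω

/-- On the event `rsI s = 1`, the single terms `F s`, `G s` are bounded by `K`. -/
lemma rsI_single_bound (hF : ∀ t ω, 0 ≤ F t ω) (hG : ∀ t ω, 0 ≤ G t ω) (s : ℕ) (ω : Ω)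
    (h : rsI F G K s ω = 1) : F s ω ≤ K ∧ G s ω ≤ K := by
  rw [rsI_eq_one_iff] at h
  obtain ⟨h1, h2⟩ := h
  constructor
  · refine le_trans ?_ h1
    exact Finset.single_le_sum (f := fun u => F u ω) (fun u _ => hF u ω)
      (Finset.self_mem_range_succ s)
  · refine le_trans ?_ h2
    exact Finset.single_le_sum (f := fun u => G u ω) (fun u _ => hG u ω)
      (Finset.self_mem_range_succ s)

/-- key bound: `∑_{s<n} rsI_s * a_{s+1} * G_s ≤ max K 0`. -/
lemma rsI_G_sum_le (hF : ∀ t ω, 0 ≤ F t ω) (hG : ∀ t ω, 0 ≤ G t ω) (hK : 0 ≤ K) (n : ℕ) (ω : Ω) :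
    ∑ s ∈ Finset.range n, rsI F G K s ω * rsA F (s+1) ω * G s ω ≤ K := by
  induction n with
  | zero => simpa using hK
  | succ n ih =>
    rw [Finset.sum_range_succ]
    rcases rsI_eq_zero_or_one (F := F) (G := G) (K := K) n ω with h | h
    · rw [h]; simpa using ih
    · -- all indicators up to n equal 1
      have hIall : ∀ s ≤ n, rsI F G K s ω = 1 := by
        intro s hs
        have hmono : ∀ m, rsI F G K n ω ≤ rsI F G K (n - m) ω := by
          intro m
          induction m with
          | zero => simp
          | succ m ihm =>
            rcases le_or_gt n m with hnm | hnm
            · have : n - (m+1) = n - m := by omega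
              rw [this]; exact ihm
            · have : n - m = (n - (m+1)) + 1 := by omega
              refine le_trans ihm ?_
              rw [this]
              exact rsI_antitone hF hG _ ω
        have := hmono (n - s)
        have hns : n - (n - s) = s := by omega
        rw [hns, h] at this
        exact le_antisymm (rsI_le_one s ω) this
      have hsum : ∑ s ∈ Finset.range (n+1), rsI F G K s ω * rsA F (s+1) ω * G s ω
          ≤ ∑ s ∈ Finset.range (n+1), G s ω := by
        refine Finset.sum_le_sum fun s hs => ?_
        have h1 : rsI F G K s ω ≤ 1 := rsI_le_one s ω
        have h2 : rsA F (s+1) ω ≤ 1 := rsA_le_one hF (s+1) ω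
        have h3 : 0 < rsA F (s+1) ω := rsA_pos hF (s+1) ω
        have h4 := rsI_nonneg (F := F) (G := G) (K := K) s ω
        have h5 := hG s ω
        have h6 : rsI F G K s ω * rsA F (s+1) ω ≤ 1 := mul_le_one₀ h1 h3.le h2
        have h7 : 0 ≤ rsI F G K s ω * rsA F (s+1) ω := mul_nonneg h4 h3.le
        nlinarith
      rw [← Finset.sum_range_succ]
      refine hsum.trans ?_
      exact ((rsI_eq_one_iff n ω).1 h).2

end RSAux

section RSMain

variable {Ω : Type*} {mΩ : MeasurableSpace Ω} (P : Measure Ω) [IsProbabilityMeasure P]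
  (𝓕 : Filtration ℕ mΩ) (W F G B : ℕ → Ω → ℝ)

/-- Per-K almost sure convergence of the stopped auxiliary process. -/
theorem rs_conv
    (hWnn : ∀ t ω, 0 ≤ W t ω) (hFnn : ∀ t ω, 0 ≤ F t ω)
    (hGnn : ∀ t ω, 0 ≤ G t ω) (hBnn : ∀ t ω, 0 ≤ B t ω)
    (hWadp : Adapted 𝓕 W) (hFadp : Adapted 𝓕 F)
    (hGadp : Adapted 𝓕 G) (hBadp : Adapted 𝓕 B)
    (hWint : ∀ t, Integrable (W t) P)
    (hineq : ∀ t, ∀ᵐ ω ∂P,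
      (P[W (t + 1)|𝓕 t]) ω ≤ (1 + F t ω) * W t ω + G t ω - B t ω * W t ω)
    (K : ℝ) (hK : 0 ≤ K) :
    ∀ᵐ ω ∂P, ∃ c, Tendsto (fun n => rsX W F G B K n ω) atTop (𝓝 c) := by
  -- measurability of building blocks
  have hFm : ∀ s n, s ≤ n → Measurable[𝓕 n] (F s) :=
    fun s n hs => (hFadp s).mono (𝓕.mono hs) le_rfl
  have hGm : ∀ s n, s ≤ n → Measurable[𝓕 n] (G s) :=
    fun s n hs => (hGadp s).mono (𝓕.mono hs) le_rfl
  have hBm : ∀ s n, s ≤ n → Measurable[𝓕 n] (B s) :=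
    fun s n hs => (hBadp s).mono (𝓕.mono hs) le_rfl
  have hWm : ∀ s n, s ≤ n → Measurable[𝓕 n] (W s) :=
    fun s n hs => (hWadp s).mono (𝓕.mono hs) le_rfl
  have hAm : ∀ m n, m ≤ n + 1 → Measurable[𝓕 n] (rsA F m) := by
    intro m n hmn
    apply Finset.measurable_prod
    intro s hs
    simp only [Finset.mem_range] at hs
    exact ((measurable_const.add (hFm s n (by omega))).inv)
  have hIm : ∀ m n, m ≤ n → Measurable[𝓕 n] (rsI F G K m) := by
    intro m n hmn
    unfold rsI
    refine Measurable.indicator measurable_const ?_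
    have : {ω | (∑ u ∈ Finset.range (m+1), F u ω) ≤ K ∧
        (∑ u ∈ Finset.range (m+1), G u ω) ≤ K}
        = {ω | (∑ u ∈ Finset.range (m+1), F u ω) ≤ K} ∩
          {ω | (∑ u ∈ Finset.range (m+1), G u ω) ≤ K} := rfl
    rw [this]
    refine MeasurableSet.inter ?_ ?_
    · exact measurableSet_le (Finset.measurable_sum _ fun u hu => hFm u n
        (by simp only [Finset.mem_range] at hu; omega)) measurable_const
    · exact measurableSet_le (Finset.measurable_sum _ fun u hu => hGm u n
        (by simp only [Finset.mem_range] at hu; omega)) measurable_const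
  have hIpm : ∀ n, Measurable[𝓕 n] (rsIp F G K n) := by
    intro n
    cases n with
    | zero => exact measurable_const
    | succ m => exact hIm m (m+1) (by omega)
  -- a.e. bound on B*W
  have hBW : ∀ s, ∀ᵐ ω ∂P, B s ω * W s ω ≤ (1 + F s ω) * W s ω + G s ω := by
    intro s
    have h0 : (0:Ω → ℝ) ≤ᵐ[P] P[W (s+1)|𝓕 s] :=
      condExp_nonneg (Eventually.of_forall fun ω => hWnn (s+1) ω)
    filter_upwards [hineq s, h0] with ω h1 h2
    simp only [Pi.zero_apply] at h2
    have := le_trans h2 h1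
    linarith
  -- integrability of the summand terms
  have htermInt : ∀ s, Integrable
      (fun ω => rsI F G K s ω * rsA F (s+1) ω * (B s ω * W s ω - G s ω)) P := by
    intro s
    refine Integrable.mono' (g := fun ω => (1+K) * W s ω + 2*K)
      (((hWint s).const_mul _).add (integrable_const _)) ?_ ?_
    · refine StronglyMeasurable.aestronglyMeasurable ?_
      refine Measurable.stronglyMeasurable ?_
      have h1 : Measurable (rsI F G K s) := (hIm s s le_rfl).mono (𝓕.le s) le_rfl
      have h2 : Measurable (rsA F (s+1)) := (hAm (s+1) s (by omega)).mono (𝓕.le s) le_rfl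
      have h3 : Measurable (B s) := (hBm s s le_rfl).mono (𝓕.le s) le_rfl
      have h4 : Measurable (W s) := (hWm s s le_rfl).mono (𝓕.le s) le_rfl
      have h5 : Measurable (G s) := (hGm s s le_rfl).mono (𝓕.le s) le_rfl
      exact ((h1.mul h2).mul ((h3.mul h4).sub h5))
    · filter_upwards [hBW s] with ω hbw
      rw [Real.norm_eq_abs]
      rcases rsI_eq_zero_or_one (F := F) (G := G) (K := K) s ω with h | h
      · rw [h]
        simp only [zero_mul]
        rw [abs_zero]
        have := hWnn s ω
        nlinarith
      · obtain ⟨hFK, hGK⟩ := rsI_single_bound hFnn hGnn s ω h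
        rw [h, one_mul]
        have ha1 : rsA F (s+1) ω ≤ 1 := rsA_le_one hFnn (s+1) ω
        have ha0 : 0 < rsA F (s+1) ω := rsA_pos hFnn (s+1) ω
        have hw := hWnn s ω
        have hg := hGnn s ω
        have hb := mul_nonneg (hBnn s ω) hw
        rw [abs_mul]
        have habs : |B s ω * W s ω - G s ω| ≤ B s ω * W s ω + G s ω :=
          abs_sub_le_iff.2 ⟨by linarith, by linarith⟩
        have h6 : |rsA F (s+1) ω| ≤ 1 := by rw [abs_of_pos ha0]; exact ha1
        have h7 : 0 ≤ |B s ω * W s ω - G s ω| := abs_nonneg _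
        nlinarith [mul_le_of_le_one_left h7 h6]
  -- integrability of X
  have hXsm : ∀ n, StronglyMeasurable[𝓕 n] (rsX W F G B K n) := by
    intro n
    refine Measurable.stronglyMeasurable ?_
    refine Measurable.add ?_ ?_
    · exact ((hIpm n).mul (hAm n n (by omega))).mul (hWm n n le_rfl)
    · refine Finset.measurable_sum _ fun s hs => ?_
      simp only [Finset.mem_range] at hs
      exact ((hIm s n (by omega)).mul (hAm (s+1) n (by omega))).mul
        (((hBm s n (by omega)).mul (hWm s n (by omega))).sub (hGm s n (by omega)))
  have hXadp : StronglyAdapted 𝓕 (rsX W F G B K) := fun n => hXsm n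
  have hXint : ∀ n, Integrable (rsX W F G B K n) P := by
    intro n
    refine Integrable.add ?_ (integrable_finset_sum _ fun s _ => htermInt s)
    refine Integrable.mono' (g := W n) (hWint n) ?_ ?_
    · exact (((hIpm n).mul (hAm n n (by omega))).mul (hWm n n le_rfl)).mono (𝓕.le n)
        le_rfl |>.stronglyMeasurable.aestronglyMeasurable
    · refine Eventually.of_forall fun ω => ?_
      rw [Real.norm_eq_abs, abs_mul, abs_mul]
      have h1 : |rsIp F G K n ω| ≤ 1 := by
        rw [abs_of_nonneg (rsIp_nonneg n ω)]; exact rsIp_le_one n ω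
      have h2 : |rsA F n ω| ≤ 1 := by
        rw [abs_of_pos (rsA_pos hFnn n ω)]; exact rsA_le_one hFnn n ω
      have h3 : |W n ω| = W n ω := abs_of_nonneg (hWnn n ω)
      rw [h3]
      nlinarith [abs_nonneg (rsIp F G K n ω), abs_nonneg (rsA F n ω), hWnn n ω,
        mul_le_one₀ h1 (abs_nonneg _) h2]
  -- supermartingale step
  have hstep : ∀ n, P[rsX W F G B K (n+1)|𝓕 n] ≤ᵐ[P] rsX W F G B K n := by
    intro n
    set c : Ω → ℝ := fun ω => rsI F G K n ω * rsA F (n+1) ω with hc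
    set R : Ω → ℝ := fun ω => ∑ s ∈ Finset.range (n+1),
      rsI F G K s ω * rsA F (s+1) ω * (B s ω * W s ω - G s ω) with hR
    have heq : rsX W F G B K (n+1) = c * W (n+1) + R := rfl
    have hcSM : StronglyMeasurable[𝓕 n] c :=
      ((hIm n n le_rfl).mul (hAm (n+1) n (by omega))).stronglyMeasurable
    have hcW : Integrable (c * W (n+1)) P := by
      refine Integrable.mono' (g := W (n+1)) (hWint (n+1)) ?_ ?_
      · exact ((hcSM.measurable.mono (𝓕.le n) le_rfl).mul
          ((hWm (n+1) (n+1) le_rfl).mono (𝓕.le (n+1)) le_rfl)).stronglyMeasurable.aestronglyMeasurable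
      · refine Eventually.of_forall fun ω => ?_
        rw [Pi.mul_apply, Real.norm_eq_abs, abs_mul]
        have h1 : |c ω| ≤ 1 := by
          rw [hc]
          simp only
          rw [abs_mul, abs_of_nonneg (rsI_nonneg n ω), abs_of_pos (rsA_pos hFnn (n+1) ω)]
          exact mul_le_one₀ (rsI_le_one n ω) (rsA_pos hFnn (n+1) ω).le (rsA_le_one hFnn (n+1) ω)
        rw [abs_of_nonneg (hWnn (n+1) ω)]
        exact mul_le_of_le_one_left (hWnn (n+1) ω) h1
    have hRint : Integrable R P := integrable_finset_sum _ fun s _ => htermInt s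
    have hRSM : StronglyMeasurable[𝓕 n] R := by
      refine Measurable.stronglyMeasurable ?_
      refine Finset.measurable_sum _ fun s hs => ?_
      simp only [Finset.mem_range] at hs
      exact ((hIm s n (by omega)).mul (hAm (s+1) n (by omega))).mul
        (((hBm s n (by omega)).mul (hWm s n (by omega))).sub (hGm s n (by omega)))
    have e1 : P[rsX W F G B K (n+1)|𝓕 n] =ᵐ[P] P[c * W (n+1)|𝓕 n] + P[R|𝓕 n] := by
      rw [heq]; exact condExp_add hcW hRint _
    have e2 : P[c * W (n+1)|𝓕 n] =ᵐ[P] c * P[W (n+1)|𝓕 n] :=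
      condExp_mul_of_stronglyMeasurable_left hcSM hcW (hWint (n+1))
    have e3 : P[R|𝓕 n] = R := condExp_of_stronglyMeasurable (𝓕.le n) hRSM hRint
    filter_upwards [e1, e2, hineq n] with ω he1 he2 hw
    rw [he1, Pi.add_apply, he2, e3, Pi.mul_apply]
    have hc0 : 0 ≤ c ω := mul_nonneg (rsI_nonneg n ω) (rsA_pos hFnn (n+1) ω).le
    have stepA : c ω * (P[W (n+1)|𝓕 n]) ω ≤
        c ω * ((1 + F n ω) * W n ω + G n ω - B n ω * W n ω) :=
      mul_le_mul_of_nonneg_left hw hc0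
    refine le_trans (add_le_add_left stepA (R ω)) ?_
    have hRsplit : R ω = (∑ s ∈ Finset.range n,
        rsI F G K s ω * rsA F (s+1) ω * (B s ω * W s ω - G s ω))
        + c ω * (B n ω * W n ω - G n ω) := by
      simp only [hR]
      rw [Finset.sum_range_succ]
      try ring
    rw [hRsplit]
    have hkey : rsA F (n+1) ω * (1 + F n ω) = rsA F n ω := rsA_succ_mul hFnn n ω
    have hXn : rsX W F G B K n ω = rsIp F G K n ω * rsA F n ω * W n ω
        + ∑ s ∈ Finset.range n,
          rsI F G K s ω * rsA F (s+1) ω * (B s ω * W s ω - G s ω) := rfl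
    rw [hXn]
    have hIle : rsI F G K n ω ≤ rsIp F G K n ω := rsI_le_rsIp hFnn hGnn n ω
    have hAW : 0 ≤ rsA F n ω * W n ω := mul_nonneg (rsA_pos hFnn n ω).le (hWnn n ω)
    have hcalc : c ω * ((1 + F n ω) * W n ω + G n ω - B n ω * W n ω)
        + c ω * (B n ω * W n ω - G n ω) = rsI F G K n ω * (rsA F n ω * W n ω) := by
      rw [hc]; simp only
      rw [← hkey]; ring
    have hfin : rsI F G K n ω * (rsA F n ω * W n ω)
        ≤ rsIp F G K n ω * rsA F n ω * W n ω := by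
      rw [mul_assoc (rsIp F G K n ω)]
      exact mul_le_mul_of_nonneg_right hIle hAW
    linarith
  have hsuper : Supermartingale (rsX W F G B K) 𝓕 P :=
    supermartingale_nat hXadp hXint hstep
  -- lower bound
  have hXlb : ∀ n ω, -K ≤ rsX W F G B K n ω := by
    intro n ω
    have hGsum := rsI_G_sum_le hFnn hGnn hK n ω
    have hsplit : ∑ s ∈ Finset.range n,
        rsI F G K s ω * rsA F (s+1) ω * (B s ω * W s ω - G s ω)
        = (∑ s ∈ Finset.range n, rsI F G K s ω * rsA F (s+1) ω * (B s ω * W s ω))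
          - ∑ s ∈ Finset.range n, rsI F G K s ω * rsA F (s+1) ω * G s ω := by
      rw [← Finset.sum_sub_distrib]
      exact Finset.sum_congr rfl fun s _ => by ring
    have hBWnn : 0 ≤ ∑ s ∈ Finset.range n,
        rsI F G K s ω * rsA F (s+1) ω * (B s ω * W s ω) :=
      Finset.sum_nonneg fun s _ => mul_nonneg (mul_nonneg (rsI_nonneg s ω)
        (rsA_pos hFnn (s+1) ω).le) (mul_nonneg (hBnn s ω) (hWnn s ω))
    have hmain : 0 ≤ rsIp F G K n ω * rsA F n ω * W n ω :=
      mul_nonneg (mul_nonneg (rsIp_nonneg n ω) (rsA_pos hFnn n ω).le) (hWnn n ω)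
    unfold rsX
    rw [hsplit]
    linarith
  have hX0 : rsX W F G B K 0 = W 0 := by
    funext ω
    simp [rsX, rsIp, rsA]
  have hmean : ∀ n, ∫ ω, rsX W F G B K n ω ∂P ≤ ∫ ω, W 0 ω ∂P := by
    intro n
    have := hsuper.setIntegral_le (Nat.zero_le n) (MeasurableSet.univ (α := Ω))
    rw [setIntegral_univ, setIntegral_univ, hX0] at this
    exact this
  set M : ℝ := ∫ ω, W 0 ω ∂P + 2*K with hM
  have hbdd : ∀ n, eLpNorm (rsX W F G B K n) 1 P ≤ ENNReal.ofReal M := by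
    intro n
    rw [eLpNorm_one_eq_lintegral_enorm,
      ← ofReal_integral_norm_eq_lintegral_enorm (hXint n)]
    refine ENNReal.ofReal_le_ofReal ?_
    have hpt : ∀ ω, ‖rsX W F G B K n ω‖ ≤ rsX W F G B K n ω + 2*K := by
      intro ω
      rw [Real.norm_eq_abs]
      have := hXlb n ω
      rw [abs_le]
      constructor <;> linarith
    calc ∫ ω, ‖rsX W F G B K n ω‖ ∂P
        ≤ ∫ ω, (rsX W F G B K n ω + 2*K) ∂P :=
          integral_mono (hXint n).norm ((hXint n).add (integrable_const _))
            (fun ω => hpt ω)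
      _ = ∫ ω, rsX W F G B K n ω ∂P + 2*K := by
          rw [integral_add (hXint n) (integrable_const _), integral_const]
          simp
      _ ≤ M := by rw [hM]; linarith [hmean n]
  have hsub : Submartingale (-(rsX W F G B K)) 𝓕 P := hsuper.neg
  have hbdd' : ∀ n, eLpNorm ((-(rsX W F G B K)) n) 1 P ≤ M.toNNReal := by
    intro n
    have : (-(rsX W F G B K)) n = -(rsX W F G B K n) := rfl
    rw [this, eLpNorm_neg]
    exact le_trans (hbdd n) (le_of_eq rfl)
  have hconv := hsub.exists_ae_tendsto_of_bdd hbdd'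
  filter_upwards [hconv] with ω hc
  obtain ⟨c, hc⟩ := hc
  refine ⟨-c, ?_⟩
  have : (fun n => rsX W F G B K n ω) = fun n => -((-(rsX W F G B K)) n ω) := by
    funext n; simp
  rw [this]
  exact hc.neg

/-- Robbins–Siegmund-lite: under the almost-supermartingale inequality with summable
perturbations and divergent damping, `W → 0` a.s. -/
theorem rs_lite
    (hWnn : ∀ t ω, 0 ≤ W t ω) (hFnn : ∀ t ω, 0 ≤ F t ω)
    (hGnn : ∀ t ω, 0 ≤ G t ω) (hBnn : ∀ t ω, 0 ≤ B t ω)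
    (hWadp : Adapted 𝓕 W) (hFadp : Adapted 𝓕 F)
    (hGadp : Adapted 𝓕 G) (hBadp : Adapted 𝓕 B)
    (hWint : ∀ t, Integrable (W t) P)
    (hineq : ∀ t, ∀ᵐ ω ∂P,
      (P[W (t + 1)|𝓕 t]) ω ≤ (1 + F t ω) * W t ω + G t ω - B t ω * W t ω)
    (hFsum : ∀ᵐ ω ∂P, Summable (fun t => F t ω))
    (hGsum : ∀ᵐ ω ∂P, Summable (fun t => G t ω))
    (hBdiv : ∀ᵐ ω ∂P, Tendsto (fun n => ∑ t ∈ Finset.range n, B t ω) atTop atTop) :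
    ∀ᵐ ω ∂P, Tendsto (fun t => W t ω) atTop (𝓝 0) := by
  have hKconv : ∀ᵐ ω ∂P, ∀ K : ℕ, ∃ c,
      Tendsto (fun n => rsX W F G B (K : ℝ) n ω) atTop (𝓝 c) := by
    rw [ae_all_iff]
    intro K
    exact rs_conv P 𝓕 W F G B hWnn hFnn hGnn hBnn hWadp hFadp hGadp hBadp hWint hineq
      (K : ℝ) (by positivity)
  filter_upwards [hKconv, hFsum, hGsum, hBdiv] with ω hX hFs hGs hBd
  -- choose K large enough that the stopping never occurs for this ω
  set K : ℕ := ⌈max (∑' t, F t ω) (∑' t, G t ω)⌉₊ with hKdef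
  have hFK : (∑' t, F t ω) ≤ (K : ℝ) :=
    le_trans (le_max_left _ _) (Nat.le_ceil _)
  have hGK : (∑' t, G t ω) ≤ (K : ℝ) :=
    le_trans (le_max_right _ _) (Nat.le_ceil _)
  have hIall : ∀ s, rsI F G (K : ℝ) s ω = 1 := by
    intro s
    rw [rsI_eq_one_iff]
    constructor
    · exact le_trans (hFs.sum_le_tsum _ (fun u _ => hFnn u ω)) hFK
    · exact le_trans (hGs.sum_le_tsum _ (fun u _ => hGnn u ω)) hGK
  have hIpall : ∀ n, rsIp F G (K : ℝ) n ω = 1 := by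
    intro n
    cases n with
    | zero => rfl
    | succ m => exact hIall m
  set a : ℕ → ℝ := fun n => rsA F n ω with ha
  set w : ℕ → ℝ := fun n => W n ω with hw
  set sB : ℕ → ℝ := fun n => ∑ s ∈ Finset.range n, a (s+1) * (B s ω * w s) with hsB
  set sG : ℕ → ℝ := fun n => ∑ s ∈ Finset.range n, a (s+1) * G s ω with hsG
  have hXeq : ∀ n, rsX W F G B (K : ℝ) n ω
      = a n * w n + ∑ s ∈ Finset.range n, a (s+1) * (B s ω * w s - G s ω) := by
    intro n
    unfold rsX
    rw [hIpall n, one_mul]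
    congr 1
    refine Finset.sum_congr rfl fun s _ => ?_
    rw [hIall s, one_mul]
  have hY : ∀ n, rsX W F G B (K : ℝ) n ω + sG n = a n * w n + sB n := by
    intro n
    rw [hXeq n, hsG, hsB]
    simp only
    rw [add_assoc, ← Finset.sum_add_distrib]
    congr 1
    refine Finset.sum_congr rfl fun s _ => ?_
    ring
  -- positivity and bounds for a
  have ha_pos : ∀ n, 0 < a n := fun n => rsA_pos hFnn n ω
  have ha_le1 : ∀ n, a n ≤ 1 := fun n => rsA_le_one hFnn n ω
  set ε : ℝ := Real.exp (-(∑' t, F t ω)) with hε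
  have hε0 : 0 < ε := Real.exp_pos _
  have ha_ge : ∀ n, ε ≤ a n := by
    intro n
    have h1 : a n = (∏ s ∈ Finset.range n, (1 + F s ω))⁻¹ := by
      rw [ha]; unfold rsA
      rw [← Finset.prod_inv_distrib]
    have h2 : (∏ s ∈ Finset.range n, (1 + F s ω)) ≤ Real.exp (∑' t, F t ω) := by
      calc (∏ s ∈ Finset.range n, (1 + F s ω))
          ≤ ∏ s ∈ Finset.range n, Real.exp (F s ω) :=
            Finset.prod_le_prod (fun s _ => by linarith [hFnn s ω])
              (fun s _ => by rw [add_comm]; exact Real.add_one_le_exp _)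
        _ = Real.exp (∑ s ∈ Finset.range n, F s ω) := (Real.exp_sum _ _).symm
        _ ≤ Real.exp (∑' t, F t ω) := Real.exp_le_exp.2
            (hFs.sum_le_tsum _ (fun u _ => hFnn u ω))
    rw [h1, hε, Real.exp_neg]
    exact inv_anti₀ (Finset.prod_pos fun s _ => by linarith [hFnn s ω]) h2
  have ha_anti : Antitone a := by
    refine antitone_nat_of_succ_le fun n => ?_
    have : a (n+1) = a n * (1 + F n ω)⁻¹ := rsA_succ n ω
    rw [this]
    refine mul_le_of_le_one_right (ha_pos n).le ?_
    exact inv_le_one_of_one_le₀ (by linarith [hFnn n ω])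
  have haL : Tendsto a atTop (𝓝 (⨅ n, a n)) :=
    tendsto_atTop_ciInf ha_anti ⟨ε, fun x hx => by
      obtain ⟨n, rfl⟩ := hx; exact ha_ge n⟩
  set aL : ℝ := ⨅ n, a n with haLdef
  have haL_ge : ε ≤ aL := le_ciInf ha_ge
  have haL0 : 0 < aL := lt_of_lt_of_le hε0 haL_ge
  -- sG converges
  have hsG_mono : Monotone sG := by
    refine monotone_nat_of_le_succ fun n => ?_
    rw [hsG]
    simp only
    rw [Finset.sum_range_succ]
    have : 0 ≤ a (n+1) * G n ω := mul_nonneg (ha_pos (n+1)).le (hGnn n ω)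
    linarith
  have hsG_bdd : BddAbove (Set.range sG) := by
    refine ⟨∑' t, G t ω, fun x hx => ?_⟩
    obtain ⟨n, rfl⟩ := hx
    calc sG n ≤ ∑ s ∈ Finset.range n, G s ω := by
          refine Finset.sum_le_sum fun s _ => ?_
          have := hGnn s ω
          nlinarith [ha_le1 (s+1), (ha_pos (s+1)).le]
      _ ≤ ∑' t, G t ω := hGs.sum_le_tsum _ (fun u _ => hGnn u ω)
  have hsGconv : Tendsto sG atTop (𝓝 (⨆ n, sG n)) := tendsto_atTop_ciSup hsG_mono hsG_bdd
  obtain ⟨c, hXc⟩ := hX K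
  have hYconv : Tendsto (fun n => a n * w n + sB n) atTop (𝓝 (c + ⨆ n, sG n)) := by
    have := hXc.add hsGconv
    refine this.congr fun n => hY n
  -- sB converges
  have hsB_mono : Monotone sB := by
    refine monotone_nat_of_le_succ fun n => ?_
    rw [hsB]
    simp only
    rw [Finset.sum_range_succ]
    have : 0 ≤ a (n+1) * (B n ω * w n) :=
      mul_nonneg (ha_pos (n+1)).le (mul_nonneg (hBnn n ω) (hWnn n ω))
    linarith
  obtain ⟨MY, hMY⟩ := hYconv.bddAbove_range
  have hsB_le : ∀ n, sB n ≤ MY := by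
    intro n
    refine le_trans ?_ (hMY (Set.mem_range_self n))
    have : 0 ≤ a n * w n := mul_nonneg (ha_pos n).le (hWnn n ω)
    linarith
  have hsBconv : Tendsto sB atTop (𝓝 (⨆ n, sB n)) :=
    tendsto_atTop_ciSup hsB_mono ⟨MY, fun x hx => by obtain ⟨n, rfl⟩ := hx; exact hsB_le n⟩
  have hAW : Tendsto (fun n => a n * w n) atTop (𝓝 ((c + ⨆ n, sG n) - ⨆ n, sB n)) := by
    have := hYconv.sub hsBconv
    refine this.congr fun n => by ring
  set d : ℝ := (c + ⨆ n, sG n) - ⨆ n, sB n with hd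
  have hd_nn : 0 ≤ d :=
    ge_of_tendsto hAW (Eventually.of_forall fun n =>
      mul_nonneg (ha_pos n).le (hWnn n ω))
  have hwtend : Tendsto w atTop (𝓝 (d / aL)) := by
    have := hAW.div haL (ne_of_gt haL0)
    refine this.congr fun n => ?_
    show a n * w n * (a n)⁻¹ = w n
    rw [mul_comm (a n) (w n), mul_assoc, mul_inv_cancel₀ (ne_of_gt (ha_pos n)), mul_one]
  have hd0 : d = 0 := by
    by_contra hne
    have hdpos : 0 < d := lt_of_le_of_ne hd_nn (Ne.symm hne)
    set L : ℝ := d / aL with hL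
    have hLpos : 0 < L := div_pos hdpos haL0
    have hev2 : ∀ᶠ n in atTop, L/2 ≤ w n :=
      hwtend.eventually (eventually_ge_nhds (by linarith))
    obtain ⟨N, hN⟩ := eventually_atTop.1 hev2
    set CN : ℝ := ∑ s ∈ Finset.range N, B s ω with hCN
    have hsum_bound : ∀ n, ∑ s ∈ Finset.range n, B s ω ≤ CN + 2*MY/(ε*L) := by
      intro n
      have hMY0 : 0 ≤ MY := le_trans (hsB_le 0) (le_refl _) |>.trans' (by
        rw [hsB]; simp)
      have hdivnn : 0 ≤ 2*MY/(ε*L) := by positivity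
      rcases le_or_gt n N with hn | hn
      · have : ∑ s ∈ Finset.range n, B s ω ≤ CN := by
          rw [hCN]
          exact Finset.sum_le_sum_of_subset_of_nonneg
            (Finset.range_subset_range.2 hn) (fun u _ _ => hBnn u ω)
        linarith
      · have hsplit : ∑ s ∈ Finset.range n, B s ω
            = CN + ∑ s ∈ Finset.Ico N n, B s ω := by
          rw [hCN, Finset.range_eq_Ico, Finset.range_eq_Ico]
          exact (Finset.sum_Ico_consecutive (fun s => B s ω) (Nat.zero_le N) hn.le).symm
        rw [hsplit]
        have hterm : ∀ s ∈ Finset.Ico N n, ε * (L/2) * B s ω ≤ a (s+1) * (B s ω * w s) := by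
          intro s hs
          simp only [Finset.mem_Ico] at hs
          have h1 := hN s hs.1
          have h2 := ha_ge (s+1)
          have h3 := hBnn s ω
          have e1 : ε * (L/2) ≤ a (s+1) * w s :=
            mul_le_mul h2 h1 (by positivity) (le_trans hε0.le h2)
          nlinarith [mul_le_mul_of_nonneg_right e1 h3]
        have hIco : ∑ s ∈ Finset.Ico N n, a (s+1) * (B s ω * w s) ≤ MY := by
          refine le_trans ?_ (hsB_le n)
          rw [hsB]
          simp only
          rw [Finset.range_eq_Ico]
          refine Finset.sum_le_sum_of_subset_of_nonneg (Finset.Ico_subset_Ico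
            (Nat.zero_le N) le_rfl) (fun u _ _ =>
            mul_nonneg (ha_pos (u+1)).le (mul_nonneg (hBnn u ω) (hWnn u ω)))
        have hS : ε * (L/2) * ∑ s ∈ Finset.Ico N n, B s ω ≤ MY := by
          rw [Finset.mul_sum]
          exact le_trans (Finset.sum_le_sum hterm) hIco
        have hεL : 0 < ε * L := by positivity
        have : ∑ s ∈ Finset.Ico N n, B s ω ≤ 2*MY/(ε*L) := by
          rw [le_div_iff₀ hεL]
          nlinarith
        linarith
    obtain ⟨n, hn⟩ := (hBd.eventually (eventually_gt_atTop (CN + 2*MY/(ε*L)))).exists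
    exact absurd (hsum_bound n) (not_le.2 hn)
  rw [hd0] at hwtend
  simpa using hwtend

end RSMain

/-- Rate-of-convergence version of the Robbins–Siegmund theorem: if
`E[V_{t+1} | 𝓕_t] ≤ (1 + f_t) V_t + g_t - α_t V_t` a.s. for every `t`, with
`Σ f_t < ∞`, `Σ g_t < ∞`, `Σ α_t = ∞` a.s., and `λ ∈ (0,1]` is such that a.s.
`α_t ≥ λ/t` eventually, `Σ (t+1)^λ g_t < ∞` and `Σ (α_t - λ/t) = ∞`, then
`t^λ V_t → 0` a.s., i.e. `V_t = o(t^{-λ})` a.s. -/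
theorem stmt_12 {Ω : Type*} {mΩ : MeasurableSpace Ω} (P : Measure Ω)
    [IsProbabilityMeasure P] (𝓕 : Filtration ℕ mΩ)
    (V f g α : ℕ → Ω → ℝ)
    (hVnn : ∀ t ω, 0 ≤ V t ω) (hfnn : ∀ t ω, 0 ≤ f t ω)
    (hgnn : ∀ t ω, 0 ≤ g t ω) (hαnn : ∀ t ω, 0 ≤ α t ω)
    (hVadp : Adapted 𝓕 V) (hfadp : Adapted 𝓕 f)
    (hgadp : Adapted 𝓕 g) (hαadp : Adapted 𝓕 α)
    (hVint : ∀ t, Integrable (V t) P)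
    (hineq : ∀ t, ∀ᵐ ω ∂P,
      (P[V (t + 1)|𝓕 t]) ω ≤ (1 + f t ω) * V t ω + g t ω - α t ω * V t ω)
    (hf : ∀ᵐ ω ∂P, Summable (fun t => f t ω))
    (hg : ∀ᵐ ω ∂P, Summable (fun t => g t ω))
    (hα : ∀ᵐ ω ∂P, Tendsto (fun n => ∑ t ∈ Finset.range n, α t ω) atTop atTop)
    (lam : ℝ) (hlam : lam ∈ Set.Ioc (0 : ℝ) 1)
    (hev : ∀ᵐ ω ∂P, ∃ T : ℕ, 0 < T ∧ ∀ t ≥ T, lam * (t : ℝ)⁻¹ ≤ α t ω)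
    (hg' : ∀ᵐ ω ∂P, Summable (fun t : ℕ => ((t : ℝ) + 1) ^ lam * g t ω))
    (hdiv : ∀ᵐ ω ∂P,
      Tendsto (fun n => ∑ t ∈ Finset.range n, (α t ω - lam * (t : ℝ)⁻¹)) atTop atTop) :
    ∀ᵐ ω ∂P, Tendsto (fun t : ℕ => (t : ℝ) ^ lam * V t ω) atTop (nhds 0) := by
  obtain ⟨hlam0, hlam1⟩ := hlam
  -- deterministic coefficients
  set b : ℕ → ℝ := fun t => ((t : ℝ) + 1) ^ lam with hb
  set r : ℕ → ℝ := fun t => (((t : ℝ) + 2) / ((t : ℝ) + 1)) ^ lam with hr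
  set D : ℕ → Ω → ℝ := fun t ω => r t * (1 + f t ω) - 1 - r t * α t ω with hD
  set F : ℕ → Ω → ℝ := fun t ω => max (D t ω) 0 with hF
  set B : ℕ → Ω → ℝ := fun t ω => max (-(D t ω)) 0 with hB
  set G : ℕ → Ω → ℝ := fun t ω => ((t : ℝ) + 2) ^ lam * g t ω with hG
  set W : ℕ → Ω → ℝ := fun t ω => b t * V t ω with hW
  have hb_pos : ∀ t, 0 < b t := fun t => Real.rpow_pos_of_pos (by positivity) _
  have hrb : ∀ t, r t * b t = ((t : ℝ) + 2) ^ lam := by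
    intro t
    rw [hr, hb]
    simp only
    rw [Real.div_rpow (by positivity) (by positivity)]
    field_simp
  have hbsucc : ∀ t : ℕ, b (t + 1) = ((t : ℝ) + 2) ^ lam := by
    intro t
    have hc : ((t + 1 : ℕ) : ℝ) + 1 = (t : ℝ) + 2 := by push_cast; ring
    rw [hb]
    simp only
    rw [hc]
  have hr_ge1 : ∀ t, 1 ≤ r t := by
    intro t
    refine Real.one_le_rpow ?_ hlam0.le
    rw [le_div_iff₀ (by positivity)]
    linarith
  have hr_le : ∀ t : ℕ, r t ≤ 1 + lam * ((t : ℝ) + 1)⁻¹ := by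
    intro t
    have heq : ((t : ℝ) + 2) / ((t : ℝ) + 1) = 1 + ((t : ℝ) + 1)⁻¹ := by
      field_simp
      ring
    rw [hr]
    simp only
    rw [heq]
    refine rpow_one_add_le_one_add_mul_self ?_ hlam0.le hlam1
    have : (0:ℝ) ≤ ((t : ℝ) + 1)⁻¹ := by positivity
    linarith
  have hr_le2 : ∀ t : ℕ, r t ≤ 2 := by
    intro t
    refine (hr_le t).trans ?_
    have h1 : ((t : ℝ) + 1)⁻¹ ≤ 1 := by
      rw [inv_le_one_iff₀]; right; linarith [Nat.cast_nonneg (α := ℝ) t]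
    nlinarith
  -- nonnegativity / adaptedness / integrability
  have hWnn : ∀ t ω, 0 ≤ W t ω := fun t ω => mul_nonneg (hb_pos t).le (hVnn t ω)
  have hFnn : ∀ t ω, 0 ≤ F t ω := fun t ω => le_max_right _ _
  have hBnn : ∀ t ω, 0 ≤ B t ω := fun t ω => le_max_right _ _
  have hGnn : ∀ t ω, 0 ≤ G t ω := fun t ω =>
    mul_nonneg (Real.rpow_nonneg (by positivity) _) (hgnn t ω)
  have hDm : ∀ t, Measurable[𝓕 t] (D t) := by
    intro t
    exact ((measurable_const.mul (measurable_const.add (hfadp t))).sub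
      measurable_const).sub (measurable_const.mul (hαadp t))
  have hWadp : Adapted 𝓕 W := fun t =>
    (measurable_const.mul (hVadp t))
  have hFadp : Adapted 𝓕 F := fun t =>
    ((hDm t).max measurable_const)
  have hBadp : Adapted 𝓕 B := fun t =>
    (((hDm t).neg).max measurable_const)
  have hGadp : Adapted 𝓕 G := fun t =>
    (measurable_const.mul (hgadp t))
  have hWint : ∀ t, Integrable (W t) P := fun t => (hVint t).const_mul _
  -- the drift inequality for W
  have hWineq : ∀ t, ∀ᵐ ω ∂P,
      (P[W (t + 1)|𝓕 t]) ω ≤ (1 + F t ω) * W t ω + G t ω - B t ω * W t ω := by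
    intro t
    have hWsm : W (t+1) = b (t+1) • V (t+1) := by
      funext ω; simp [hW, smul_eq_mul]
    have hsmul : P[W (t+1)|𝓕 t] =ᵐ[P] b (t+1) • P[V (t+1)|𝓕 t] := by
      rw [hWsm]; exact condExp_smul _ _ _
    filter_upwards [hsmul, hineq t] with ω h1 h2
    rw [h1, Pi.smul_apply, smul_eq_mul]
    have step1 : b (t+1) * (P[V (t+1)|𝓕 t]) ω
        ≤ b (t+1) * ((1 + f t ω) * V t ω + g t ω - α t ω * V t ω) :=
      mul_le_mul_of_nonneg_left h2 (hb_pos (t+1)).le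
    refine step1.trans (le_of_eq ?_)
    have hFB : F t ω - B t ω = D t ω := by
      rw [hF, hB]; simp only
      exact max_zero_sub_max_neg_zero_eq_self _
    have hF_eq : F t ω = D t ω + B t ω := by linarith
    have hDval : D t ω = r t * (1 + f t ω) - 1 - r t * α t ω := rfl
    have hGval : G t ω = (r t * b t) * g t ω := by rw [hG]; simp only; rw [hrb]
    have hbv : b (t+1) = r t * b t := by rw [hbsucc, hrb]
    rw [hF_eq, hGval, hbv, hDval]
    show r t * b t * ((1 + f t ω) * V t ω + g t ω - α t ω * V t ω)
      = (1 + (r t * (1 + f t ω) - 1 - r t * α t ω + B t ω)) * (b t * V t ω)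
        + r t * b t * g t ω - B t ω * (b t * V t ω)
    ring
  -- summability of F
  have hFsum : ∀ᵐ ω ∂P, Summable (fun t => F t ω) := by
    filter_upwards [hf, hev] with ω hfs ⟨T, hT0, hT⟩
    rw [← summable_nat_add_iff T]
    refine Summable.of_nonneg_of_le (fun n => hFnn (n + T) ω)
      (fun n => ?_) ((summable_nat_add_iff T).2 (hfs.mul_left 2))
    set t : ℕ := n + T with ht
    have htT : T ≤ t := by omega
    have ht1 : (1 : ℝ) ≤ (t : ℝ) := by
      have : 1 ≤ t := by omega
      exact_mod_cast this
    have hα' : lam * (t : ℝ)⁻¹ ≤ α t ω := hT t htT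
    have h1 := hr_le t
    have h2 := hr_le2 t
    have h3 := hr_ge1 t
    have hstep : lam * ((t : ℝ) + 1)⁻¹ ≤ lam * (t : ℝ)⁻¹ := by
      refine mul_le_mul_of_nonneg_left ?_ hlam0.le
      refine inv_anti₀ (by linarith) (by linarith)
    have hDle : D t ω ≤ 2 * f t ω := by
      rw [hD]
      simp only
      have hα0 := hαnn t ω
      have hf0 := hfnn t ω
      nlinarith [mul_nonneg (sub_nonneg.2 h2) hf0, mul_nonneg (sub_nonneg.2 h3) hα0]
    rw [hF]
    simp only
    exact max_le hDle (mul_nonneg (by norm_num) (hfnn _ ω))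
  -- summability of G
  have hGsum : ∀ᵐ ω ∂P, Summable (fun t => G t ω) := by
    filter_upwards [hg'] with ω hg's
    refine Summable.of_nonneg_of_le (fun t => hGnn t ω) (fun t => ?_) (hg's.mul_left 2)
    rw [hG]
    simp only
    have h1 : ((t : ℝ) + 2) ^ lam ≤ 2 * ((t : ℝ) + 1) ^ lam := by
      have h2 : ((t : ℝ) + 2) ^ lam ≤ (2 * ((t : ℝ) + 1)) ^ lam :=
        Real.rpow_le_rpow (by positivity) (by linarith [Nat.cast_nonneg (α := ℝ) t]) hlam0.le
      rw [Real.mul_rpow (by norm_num) (by positivity)] at h2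
      have h3 : (2 : ℝ) ^ lam ≤ 2 := by
        calc (2:ℝ) ^ lam ≤ (2:ℝ) ^ (1:ℝ) := Real.rpow_le_rpow_of_exponent_le (by norm_num) hlam1
          _ = 2 := Real.rpow_one 2
      refine h2.trans ?_
      have h4 : (0:ℝ) ≤ ((t : ℝ) + 1) ^ lam := Real.rpow_nonneg (by positivity) _
      nlinarith
    have := hgnn t ω
    nlinarith [Real.rpow_nonneg (show (0:ℝ) ≤ (t:ℝ)+2 by positivity) lam]
  -- divergence of B
  have hBdiv : ∀ᵐ ω ∂P, Tendsto (fun n => ∑ t ∈ Finset.range n, B t ω) atTop atTop := by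
    filter_upwards [hf, hdiv] with ω hfs hdv
    set C : ℝ := 2 * (∑' t, f t ω) + lam with hC
    have htb : ∀ t : ℕ, (α t ω - lam * (t : ℝ)⁻¹) - 2 * f t ω
        - (if t = 0 then lam else 0) ≤ B t ω := by
      intro t
      have hstep2 : lam * ((t : ℝ) + 1)⁻¹ ≤ lam * (t : ℝ)⁻¹ + (if t = 0 then lam else 0) := by
        cases t with
        | zero => simp
        | succ m =>
          simp only [Nat.succ_ne_zero, if_false, add_zero]
          refine mul_le_mul_of_nonneg_left ?_ hlam0.le
          refine inv_anti₀ (by exact_mod_cast Nat.succ_pos m) ?_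
          linarith
      have h1 := hr_le t
      have h3 := hr_ge1 t
      have h2 := hr_le2 t
      have hα0 := hαnn t ω
      have hf0 := hfnn t ω
      have hnD : (α t ω - lam * (t : ℝ)⁻¹) - 2 * f t ω - (if t = 0 then lam else 0)
          ≤ -(D t ω) := by
        rw [hD]
        simp only
        nlinarith [mul_nonneg (sub_nonneg.2 h2) hf0, mul_nonneg (sub_nonneg.2 h3) hα0]
      exact hnD.trans (le_max_left _ _)
    have hsum_le : ∀ n, (∑ t ∈ Finset.range n, (α t ω - lam * (t : ℝ)⁻¹)) + (-C)
        ≤ ∑ t ∈ Finset.range n, B t ω := by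
      intro n
      have h1 : ∑ t ∈ Finset.range n, ((α t ω - lam * (t : ℝ)⁻¹) - 2 * f t ω
          - (if t = 0 then lam else 0)) ≤ ∑ t ∈ Finset.range n, B t ω :=
        Finset.sum_le_sum fun t _ => htb t
      have h2 : ∑ t ∈ Finset.range n, ((α t ω - lam * (t : ℝ)⁻¹) - 2 * f t ω
          - (if t = 0 then lam else 0))
          = (∑ t ∈ Finset.range n, (α t ω - lam * (t : ℝ)⁻¹))
            - 2 * (∑ t ∈ Finset.range n, f t ω)
            - ∑ t ∈ Finset.range n, (if t = 0 then lam else 0) := by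
        rw [Finset.sum_sub_distrib, Finset.sum_sub_distrib, Finset.mul_sum]
      have h3 : ∑ t ∈ Finset.range n, f t ω ≤ ∑' t, f t ω :=
        hfs.sum_le_tsum _ (fun u _ => hfnn u ω)
      have h4 : ∑ t ∈ Finset.range n, (if t = 0 then lam else 0) ≤ lam := by
        rw [Finset.sum_ite_eq' (Finset.range n) 0 (fun _ => lam)]
        split_ifs
        · exact le_refl lam
        · exact hlam0.le
      rw [h2] at h1
      rw [hC]
      linarith
    refine tendsto_atTop_mono hsum_le ?_
    exact tendsto_atTop_add_const_right _ (-C) hdv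
  -- apply the Robbins–Siegmund-lite theorem
  have hmain := rs_lite P 𝓕 W F G B hWnn hFnn hGnn hBnn hWadp hFadp hGadp hBadp hWint
    hWineq hFsum hGsum hBdiv
  filter_upwards [hmain] with ω hw0
  refine squeeze_zero (fun t => mul_nonneg (Real.rpow_nonneg (Nat.cast_nonneg t) _) (hVnn t ω))
    (fun t => ?_) hw0
  refine mul_le_mul_of_nonneg_right ?_ (hVnn t ω)
  exact Real.rpow_le_rpow (Nat.cast_nonneg t) (by linarith) hlam0.le
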